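/- arXiv:1501.02493 — 4 statements merged into one kernel-verified Lean document; each statement's English description precedes it below -/
import Mathlib

section
/- Let h be a measure function in ℝⁿ, i.e. there exists a non-empty compact set Γ ⊂ ℝⁿ and a finite Radon measure μ with supp μ = Γ and μ(B(γ,r)) ≍ h(r) for all r ∈ (0,1] and γ ∈ Γ. Then there exists a constant c > 0 such that for all j, k ∈ ℕ₀: h(2^{-k-j})/h(2^{-j}) ≥ c · 2^{-kn}. -/
open Filter Real MeasureTheory Metric Set

/-- `h` is a gauge function: positive, continuous, non-decreasing on `(0,1]`,
with `h(r) → 0` as `r → 0`. -/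
def GaugeFunction (h : ℝ → ℝ) : Prop :=
  (∀ r ∈ Set.Ioc (0 : ℝ) 1, 0 < h r) ∧
  ContinuousOn h (Set.Ioc (0 : ℝ) 1) ∧
  MonotoneOn h (Set.Ioc (0 : ℝ) 1) ∧
  Tendsto h (nhdsWithin 0 (Set.Ioi 0)) (nhds 0)

/-- `Γ` is an `h`-set in `ℝⁿ` with associated finite Radon measure `μ`:
`Γ` is nonempty compact, `μ` is a finite measure with support `Γ`, and
`μ(B(γ,r)) ≍ h(r)` for `γ ∈ Γ`, `r ∈ (0,1]`. -/
def IsHSet {n : ℕ} (h : ℝ → ℝ) (Γ : Set (EuclideanSpace ℝ (Fin n)))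
    (μ : Measure (EuclideanSpace ℝ (Fin n))) : Prop :=
  Γ.Nonempty ∧ IsCompact Γ ∧ IsFiniteMeasure μ ∧
  -- `supp μ = Γ`:
  μ Γᶜ = 0 ∧ (∀ γ ∈ Γ, ∀ r : ℝ, 0 < r → 0 < μ (Metric.ball γ r)) ∧
  -- `μ(B(γ,r)) ≍ h(r)`:
  ∃ c₁ c₂ : ℝ, 0 < c₁ ∧ 0 < c₂ ∧ ∀ γ ∈ Γ, ∀ r ∈ Set.Ioc (0 : ℝ) 1,
    ENNReal.ofReal (c₁ * h r) ≤ μ (Metric.closedBall γ r) ∧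
    μ (Metric.closedBall γ r) ≤ ENNReal.ofReal (c₂ * h r)

section aux
open ENNReal


-- extraction of maximal separated subset
lemma extractSep' {E : Type*} [MetricSpace E] (t : Finset E) {δ : ℝ} (hδ : 0 < δ) :
    ∃ u : Finset E, u ⊆ t ∧ ((u : Set E).Pairwise fun a b => δ ≤ dist a b) ∧
      ∀ x ∈ t, ∃ y ∈ u, dist x y < δ := by
  classical
  set 𝒮 : Finset (Finset E) := t.powerset.filter
    (fun v => (v : Set E).Pairwise fun a b => δ ≤ dist a b) with h𝒮
  have hne : 𝒮.Nonempty := ⟨∅, by simp [h𝒮]⟩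
  obtain ⟨u, hu, hmax⟩ := 𝒮.exists_maximal hne
  simp only [h𝒮, Finset.mem_filter, Finset.mem_powerset] at hu
  refine ⟨u, hu.1, hu.2, ?_⟩
  intro x hx
  by_contra hcon
  push_neg at hcon
  have hxu : x ∉ u := fun hxu => absurd (hcon x hxu) (by simp [hδ])
  have hins : insert x u ∈ 𝒮 := by
    simp only [h𝒮, Finset.mem_filter, Finset.mem_powerset]
    refine ⟨Finset.insert_subset hx hu.1, ?_⟩
    rw [Finset.coe_insert]
    haveI : Std.Symm (fun a b : E => δ ≤ dist a b) := ⟨fun a b hab => by rwa [dist_comm]⟩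
    refine Set.pairwise_insert_of_symm |>.2 ⟨hu.2, ?_⟩
    intro y hy _
    exact hcon y hy
  exact hxu (hmax hins (Finset.subset_insert x u) (Finset.mem_insert_self x u))


lemma packCard' {n : ℕ} (γ : EuclideanSpace ℝ (Fin n)) {R ε : ℝ}
    (hε : 0 < ε) (hR : 0 < R) (u : Finset (EuclideanSpace ℝ (Fin n)))
    (hu : ↑u ⊆ closedBall γ R)
    (hsep : (u : Set (EuclideanSpace ℝ (Fin n))).Pairwise fun a b => 2 * ε ≤ dist a b) :
    (u.card : ℝ) * ε ^ n ≤ (R + ε) ^ n := by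
  have hfr : Module.finrank ℝ (EuclideanSpace ℝ (Fin n)) = n := finrank_euclideanSpace_fin
  have hdisj : (u : Set (EuclideanSpace ℝ (Fin n))).PairwiseDisjoint fun y => ball y ε := by
    intro a ha b hb hab
    exact ball_disjoint_ball (by linarith [hsep ha hb hab])
  have hmeas : ∀ y ∈ u, MeasurableSet (ball y ε) := fun y _ => measurableSet_ball
  have hU : volume (⋃ y ∈ u, ball y ε) = ∑ y ∈ u, volume (ball y ε) :=
    measure_biUnion_finset hdisj hmeas
  have hone : ∀ y : EuclideanSpace ℝ (Fin n), volume (ball y ε) = ENNReal.ofReal (ε ^ n) * volume (ball (0 : EuclideanSpace ℝ (Fin n)) 1) := by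
    intro y
    rw [Measure.addHaar_ball_of_pos volume y hε, hfr]
  have hsub : (⋃ y ∈ u, ball y ε) ⊆ ball γ (R + ε) := by
    intro z hz
    simp only [mem_iUnion, exists_prop] at hz
    obtain ⟨y, hy, hzy⟩ := hz
    have := hu hy
    rw [mem_closedBall] at this
    rw [mem_ball] at hzy ⊢
    calc dist z γ ≤ dist z y + dist y γ := dist_triangle _ _ _
      _ < R + ε := by linarith
  have hbig : volume (ball γ (R + ε)) =
      ENNReal.ofReal ((R + ε) ^ n) * volume (ball (0 : EuclideanSpace ℝ (Fin n)) 1) := by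
    rw [Measure.addHaar_ball_of_pos volume γ (by linarith), hfr]
  have key : (u.card : ℝ≥0∞) * (ENNReal.ofReal (ε ^ n) * volume (ball (0 : EuclideanSpace ℝ (Fin n)) 1))
      ≤ ENNReal.ofReal ((R + ε) ^ n) * volume (ball (0 : EuclideanSpace ℝ (Fin n)) 1) := by
    calc (u.card : ℝ≥0∞) * (ENNReal.ofReal (ε ^ n) * volume (ball (0 : EuclideanSpace ℝ (Fin n)) 1))
        = ∑ y ∈ u, volume (ball y ε) := by
          rw [Finset.sum_congr rfl (fun y _ => hone y), Finset.sum_const, nsmul_eq_mul]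
      _ = volume (⋃ y ∈ u, ball y ε) := hU.symm
      _ ≤ volume (ball γ (R + ε)) := measure_mono hsub
      _ = _ := hbig
  have hV0 : volume (ball (0 : EuclideanSpace ℝ (Fin n)) 1) ≠ 0 := (measure_ball_pos volume _ one_pos).ne'
  have hVt : volume (ball (0 : EuclideanSpace ℝ (Fin n)) 1) ≠ ⊤ := measure_ball_lt_top.ne
  rw [← mul_assoc] at key
  have key2 : (u.card : ℝ≥0∞) * ENNReal.ofReal (ε ^ n) ≤ ENNReal.ofReal ((R + ε) ^ n) :=
    (ENNReal.mul_le_mul_iff_left hV0 hVt).mp key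
  rw [← ENNReal.ofReal_natCast, ← ENNReal.ofReal_mul (by positivity)] at key2
  exact (ENNReal.ofReal_le_ofReal_iff (by positivity)).mp key2

end aux

theorem measure_function_lower_doubling {n : ℕ} (hn : 0 < n) (h : ℝ → ℝ)
    (hgauge : GaugeFunction h)
    (hmeas : ∃ (Γ : Set (EuclideanSpace ℝ (Fin n)))
      (μ : Measure (EuclideanSpace ℝ (Fin n))), IsHSet h Γ μ) :
    ∃ c : ℝ, 0 < c ∧ ∀ j k : ℕ,
      c * 2 ^ (-((k : ℝ) * n)) ≤ h (2 ^ (-((k : ℝ) + j))) / h (2 ^ (-(j : ℝ))) := by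
  obtain ⟨Γ, μ, hne, hcomp, hfin, hnull, hpos, c₁, c₂, hc₁, hc₂, hcmp⟩ := hmeas
  obtain ⟨γ, hγ⟩ := hne
  have hpow8 : (0:ℝ) < 8 ^ n := by positivity
  refine ⟨c₁ / (c₂ * 8 ^ n), by positivity, ?_⟩
  intro j k
  set R : ℝ := 2 ^ (-(j : ℝ)) with hRdef
  set ρ : ℝ := 2 ^ (-((k : ℝ) + j)) with hρdef
  have h2 : (0:ℝ) < 2 := two_pos
  have hR0 : 0 < R := rpow_pos_of_pos h2 _
  have hρ0 : 0 < ρ := rpow_pos_of_pos h2 _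
  have hR1 : R ≤ 1 := rpow_le_one_of_one_le_of_nonpos one_le_two (by simp)
  have hρ1 : ρ ≤ 1 := rpow_le_one_of_one_le_of_nonpos one_le_two (neg_nonpos.mpr (by positivity))
  have hρR : ρ ≤ R := rpow_le_rpow_of_exponent_le one_le_two
    (by linarith [Nat.cast_nonneg (α := ℝ) k])
  have hhR : 0 < h R := hgauge.1 R ⟨hR0, hR1⟩
  have hhρ : 0 < h ρ := hgauge.1 ρ ⟨hρ0, hρ1⟩
  -- the compact set to cover
  have hS : IsCompact (Γ ∩ closedBall γ R) := hcomp.inter_right isClosed_closedBall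
  obtain ⟨t0, ht0sub, ht0fin, ht0cov⟩ := hS.finite_cover_balls (e := ρ / 4) (by positivity)
  obtain ⟨t, rfl⟩ : ∃ t : Finset (EuclideanSpace ℝ (Fin n)), ↑t = t0 := ⟨ht0fin.toFinset, ht0fin.coe_toFinset⟩
  obtain ⟨u, hut, husep, hucov⟩ := extractSep' t (δ := ρ / 2) (by positivity)
  have huS : ↑u ⊆ Γ ∩ closedBall γ R := fun x hx => ht0sub (hut hx)
  -- covering of S by closed balls of radius ρ around u
  have hcov : Γ ∩ closedBall γ R ⊆ ⋃ y ∈ u, closedBall y ρ := by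
    intro s hs
    obtain ⟨x, hx, hsx⟩ := by
      have := ht0cov hs
      simpa only [mem_iUnion, exists_prop, mem_ball] using this
    obtain ⟨y, hy, hxy⟩ := hucov x hx
    simp only [mem_iUnion, exists_prop, mem_closedBall]
    exact ⟨y, hy, by
      calc dist s y ≤ dist s x + dist x y := dist_triangle _ _ _
        _ ≤ ρ := by linarith⟩
  -- cardinality bound
  have hReq : R = 2 ^ ((k:ℝ)) * ρ := by
    rw [hRdef, hρdef, ← Real.rpow_add h2]
    congr 1
    ring
  have hkpow : ((2:ℝ) ^ ((k:ℝ))) ^ n = (2:ℝ) ^ ((k:ℝ) * n) := by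
    rw [← Real.rpow_natCast ((2:ℝ) ^ ((k:ℝ))) n, ← Real.rpow_mul (le_of_lt h2)]
  have hcard : (u.card : ℝ) ≤ 8 ^ n * (2:ℝ) ^ ((k:ℝ) * n) := by
    have hpack := packCard' γ (ε := ρ / 4) (by positivity) hR0 u
      (fun x hx => (huS hx).2) (by
        have h24 : 2 * (ρ / 4) = ρ / 2 := by ring
        rw [h24]; exact husep)
    have hk0 : (0:ℝ) < 2 ^ ((k:ℝ)) := rpow_pos_of_pos h2 _
    have h3 : (R + ρ / 4) ^ n ≤ (2 * R) ^ n :=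
      pow_le_pow_left₀ (by positivity) (by linarith) n
    have h5 : (2 * R) ^ n = 8 ^ n * (2:ℝ) ^ ((k:ℝ) * n) * (ρ / 4) ^ n := by
      rw [← hkpow]
      have : 2 * R = 8 * 2 ^ ((k:ℝ)) * (ρ / 4) := by rw [hReq]; ring
      rw [this, mul_pow, mul_pow]
    have hρ4 : (0:ℝ) < (ρ / 4) ^ n := by positivity
    have := hpack.trans (h3.trans_eq h5)
    exact le_of_mul_le_mul_right this hρ4
  -- measure chain
  have hchain : ENNReal.ofReal (c₁ * h R) ≤ (u.card : ENNReal) * ENNReal.ofReal (c₂ * h ρ) := by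
    calc ENNReal.ofReal (c₁ * h R) ≤ μ (closedBall γ R) := (hcmp γ hγ R ⟨hR0, hR1⟩).1
      _ ≤ μ ((Γ ∩ closedBall γ R) ∪ Γᶜ) := measure_mono (by
          intro z hz
          by_cases hzΓ : z ∈ Γ
          · exact Or.inl ⟨hzΓ, hz⟩
          · exact Or.inr hzΓ)
      _ ≤ μ (Γ ∩ closedBall γ R) + μ Γᶜ := measure_union_le _ _
      _ = μ (Γ ∩ closedBall γ R) := by rw [hnull, add_zero]
      _ ≤ μ (⋃ y ∈ u, closedBall y ρ) := measure_mono hcov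
      _ ≤ ∑ y ∈ u, μ (closedBall y ρ) := measure_biUnion_finset_le _ _
      _ ≤ ∑ _y ∈ u, ENNReal.ofReal (c₂ * h ρ) := Finset.sum_le_sum
          (fun y hy => (hcmp y (huS hy).1 ρ ⟨hρ0, hρ1⟩).2)
      _ = (u.card : ENNReal) * ENNReal.ofReal (c₂ * h ρ) := by
          rw [Finset.sum_const, nsmul_eq_mul]
  -- convert to real inequality
  have hreal : c₁ * h R ≤ (u.card : ℝ) * (c₂ * h ρ) := by
    rw [← ENNReal.ofReal_natCast, ← ENNReal.ofReal_mul (by positivity)] at hchain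
    exact (ENNReal.ofReal_le_ofReal_iff (by positivity)).mp hchain
  have hkey : c₁ * h R ≤ 8 ^ n * (2:ℝ) ^ ((k:ℝ) * n) * (c₂ * h ρ) := by
    refine hreal.trans (mul_le_mul_of_nonneg_right hcard (by positivity))
  -- final algebra
  have hT0 : (0:ℝ) < (2:ℝ) ^ ((k:ℝ) * n) := rpow_pos_of_pos h2 _
  have hneg : (2:ℝ) ^ (-((k:ℝ) * n)) = ((2:ℝ) ^ ((k:ℝ) * n))⁻¹ := by
    rw [Real.rpow_neg (by norm_num)]
  rw [hneg,
    show c₁ / (c₂ * 8 ^ n) * ((2:ℝ) ^ ((k:ℝ) * n))⁻¹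
      = c₁ / (c₂ * 8 ^ n * (2:ℝ) ^ ((k:ℝ) * n)) by ring,
    div_le_div_iff₀ (by positivity) hhR]
  exact hkey.trans_eq (by ring)
end

section
/- Let h be a gauge function for which there exist constants c > 0 and ε > 0 with h(2^{-j-k})/h(2^{-j}) ≥ c·2^{-(n-ε)k} for all j, k ∈ ℕ₀. Then lim_{r→0} r^n / h(r) = 0. Consequently, an h-set Γ ⊂ ℝⁿ satisfying the porosity condition has Lebesgue measure zero. -/
open Filter Real MeasureTheory Metric Set

lemma aux_ratio_bound (n : ℕ) (h : ℝ → ℝ)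
    (hpos : ∀ r ∈ Set.Ioc (0 : ℝ) 1, 0 < h r)
    (hmono : MonotoneOn h (Set.Ioc (0 : ℝ) 1))
    (c ε : ℝ) (hc : 0 < c) (hε : 0 < ε)
    (hpor : ∀ j k : ℕ,
      c * 2 ^ (-(((n : ℝ) - ε) * k)) ≤ h (2 ^ (-((j : ℝ) + k))) / h (2 ^ (-(j : ℝ)))) :
    ∀ r ∈ Set.Ioc (0 : ℝ) 1, r ^ n / h r ≤ (2 ^ n / (c * h 1)) * r ^ ε := by
  intro r hr
  obtain ⟨hr0, hr1⟩ := hr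
  have h1 : 0 < h 1 := hpos 1 ⟨one_pos, le_rfl⟩
  set l := Int.log 2 r with hl
  have hlle : l ≤ 0 := by
    by_contra hcon
    push_neg at hcon
    have h2 : (2 : ℝ) ^ l ≤ r := Int.zpow_log_le_self (by norm_num) hr0
    have h3 : (1 : ℝ) < (2 : ℝ) ^ l := one_lt_zpow₀ one_lt_two (by omega)
    linarith
  set k : ℕ := (-l).toNat with hk
  have hkl : (k : ℤ) = -l := Int.toNat_of_nonneg (by omega)
  have hkR : (k : ℝ) = -(l : ℝ) := by exact_mod_cast hkl
  set ρ := (2 : ℝ) ^ (-(k : ℝ)) with hρdef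
  have hρz : ρ = (2 : ℝ) ^ (l : ℤ) := by
    rw [hρdef, ← Real.rpow_intCast 2 l]
    congr 1
    rw [hkR]; ring
  have hρpos : 0 < ρ := Real.rpow_pos_of_pos two_pos _
  have hρr : ρ ≤ r := by
    rw [hρz]; exact Int.zpow_log_le_self (by norm_num) hr0
  have hρ1 : ρ ≤ 1 := hρr.trans hr1
  have hrup : r < (2 : ℝ) ^ ((1 : ℝ) - k) := by
    have h4 : r < (2 : ℝ) ^ (l + 1) := Int.lt_zpow_succ_log_self (by norm_num) r
    have : (2 : ℝ) ^ ((1 : ℝ) - k) = (2 : ℝ) ^ (l + 1 : ℤ) := by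
      rw [← Real.rpow_intCast 2 (l + 1)]
      congr 1
      push_cast
      rw [hkR]; ring
    rw [this]; exact h4
  have hA := hpor 0 k
  have e1 : (2 : ℝ) ^ (-(((0 : ℕ) : ℝ) + k)) = ρ := by rw [hρdef]; congr 1; simp
  have e2 : (2 : ℝ) ^ (-((0 : ℕ) : ℝ)) = 1 := by
    norm_num
  rw [e1, e2] at hA
  have hhρ : c * 2 ^ (-(((n : ℝ) - ε) * k)) * h 1 ≤ h ρ := by
    rw [← le_div_iff₀ h1]; exact hA
  have hhr : h ρ ≤ h r := hmono ⟨hρpos, hρ1⟩ ⟨hr0, hr1⟩ hρr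
  have hrpos : 0 < h r := hpos r ⟨hr0, hr1⟩
  have hden : 0 < c * 2 ^ (-(((n : ℝ) - ε) * k)) * h 1 := by positivity
  have hnum : r ^ n ≤ ((2 : ℝ) ^ ((1 : ℝ) - k)) ^ n :=
    pow_le_pow_left₀ hr0.le hrup.le n
  have key : r ^ n / h r ≤
      ((2 : ℝ) ^ ((1 : ℝ) - k)) ^ n / (c * 2 ^ (-(((n : ℝ) - ε) * k)) * h 1) :=
    div_le_div₀ (by positivity) hnum hden (le_trans hhρ hhr)
  have e3 : ((2 : ℝ) ^ ((1 : ℝ) - k)) ^ n = (2 : ℝ) ^ (((1 : ℝ) - k) * n) := by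
    rw [← Real.rpow_natCast ((2 : ℝ) ^ ((1 : ℝ) - k)) n, ← Real.rpow_mul (by norm_num)]
  have e4 : ρ ^ ε = (2 : ℝ) ^ (-(k : ℝ) * ε) := by
    rw [hρdef, ← Real.rpow_mul (by norm_num)]
  have e5 : (2 : ℝ) ^ (((1 : ℝ) - k) * n) =
      2 ^ (n : ℕ) * ((2 : ℝ) ^ (-(((n : ℝ) - ε) * k)) * (2 : ℝ) ^ (-(k : ℝ) * ε)) := by
    have harith : ((1 : ℝ) - k) * n = (n : ℝ) + (-(((n : ℝ) - ε) * k) + -(k : ℝ) * ε) := by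
      ring
    rw [harith, Real.rpow_add two_pos, Real.rpow_add two_pos, Real.rpow_natCast]
  have hapos : (0 : ℝ) < 2 ^ (-(((n : ℝ) - ε) * k)) := Real.rpow_pos_of_pos two_pos _
  have e6 : ((2 : ℝ) ^ ((1 : ℝ) - k)) ^ n / (c * 2 ^ (-(((n : ℝ) - ε) * k)) * h 1) =
      (2 ^ n / (c * h 1)) * ρ ^ ε := by
    rw [e3, e5, e4]
    field_simp
  rw [e6] at key
  refine key.trans ?_
  have : ρ ^ ε ≤ r ^ ε := Real.rpow_le_rpow hρpos.le hρr hε.le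
  have hK : (0 : ℝ) ≤ 2 ^ n / (c * h 1) := by positivity
  exact mul_le_mul_of_nonneg_left this hK

theorem porosity_criterion_implies_null {n : ℕ} (hn : 0 < n) (h : ℝ → ℝ)
    (hgauge : GaugeFunction h)
    (hporo : ∃ c ε : ℝ, 0 < c ∧ 0 < ε ∧ ∀ j k : ℕ,
      c * 2 ^ (-(((n : ℝ) - ε) * k)) ≤ h (2 ^ (-((j : ℝ) + k))) / h (2 ^ (-(j : ℝ)))) :
    Tendsto (fun r : ℝ => r ^ (n : ℕ) / h r) (nhdsWithin 0 (Set.Ioi 0)) (nhds 0) ∧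
    ∀ (Γ : Set (EuclideanSpace ℝ (Fin n))) (μ : Measure (EuclideanSpace ℝ (Fin n))),
      IsHSet h Γ μ → volume Γ = 0 := by
  obtain ⟨c, ε, hc, hε, hpor⟩ := hporo
  obtain ⟨hpos, hcont, hmono, htend⟩ := hgauge
  have hbound := aux_ratio_bound n h hpos hmono c ε hc hε hpor
  set K : ℝ := 2 ^ n / (c * h 1) with hK
  have hmemIoc : Set.Ioc (0 : ℝ) 1 ∈ nhdsWithin (0 : ℝ) (Set.Ioi 0) := by
    have : Set.Ioc (0 : ℝ) 1 = Set.Ioi 0 ∩ Set.Iic 1 := by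
      ext x; simp [Set.mem_Ioc, Set.mem_Ioi, Set.mem_Iic, and_comm]
    rw [this]
    exact Filter.inter_mem self_mem_nhdsWithin
      (mem_nhdsWithin_of_mem_nhds (Iic_mem_nhds one_pos))
  have part1 : Tendsto (fun r : ℝ => r ^ (n : ℕ) / h r) (nhdsWithin 0 (Set.Ioi 0)) (nhds 0) := by
    have hg : Tendsto (fun r : ℝ => K * r ^ ε) (nhdsWithin 0 (Set.Ioi 0)) (nhds 0) := by
      have h0 : Tendsto (fun r : ℝ => r ^ ε) (nhds 0) (nhds ((0 : ℝ) ^ ε)) :=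
        (Real.continuousAt_rpow_const 0 ε (Or.inr hε.le)).tendsto
      rw [Real.zero_rpow hε.ne'] at h0
      have h1 : Tendsto (fun r : ℝ => r ^ ε) (nhdsWithin 0 (Set.Ioi 0)) (nhds 0) :=
        h0.mono_left nhdsWithin_le_nhds
      have := h1.const_mul K
      simpa using this
    refine squeeze_zero' ?_ ?_ hg
    · filter_upwards [hmemIoc] with r hr
      exact div_nonneg (pow_nonneg hr.1.le n) (hpos r hr).le
    · filter_upwards [hmemIoc] with r hr
      exact hbound r hr
  refine ⟨part1, ?_⟩
  intro Γ μ hset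
  obtain ⟨hne, hcomp, hfin, hnull, hballpos, c₁, c₂, hc₁, hc₂, hmeas⟩ := hset
  haveI := hfin
  set V := volume (Metric.ball (0 : EuclideanSpace ℝ (Fin n)) 1) with hV
  have hVpos : 0 < V := measure_ball_pos _ _ one_pos
  have hVlt : V < ⊤ := measure_ball_lt_top
  set Kv : ℝ := V.toReal with hKv
  have hKvpos : 0 < Kv := ENNReal.toReal_pos hVpos.ne' hVlt.ne
  -- main step: for every a > 0, volume Γ ≤ ofReal a * μ univ
  have main : ∀ a : ℝ, 0 < a → volume Γ ≤ ENNReal.ofReal a * μ Set.univ := by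
    intro a ha
    set δ : ℝ := a * c₁ / Kv with hδ
    have hδpos : 0 < δ := by positivity
    have hev : ∀ᶠ r in nhdsWithin (0 : ℝ) (Set.Ioi 0), r ^ (n : ℕ) / h r < δ :=
      part1.eventually (Filter.Tendsto.eventually_lt_const hδpos tendsto_id)
    obtain ⟨r₀, hr₀pos, hr₀⟩ : ∃ r₀ > 0, ∀ r, 0 < r → r < r₀ → r ^ (n : ℕ) / h r < δ := by
      rw [(nhdsGT_basis (0:ℝ)).eventually_iff] at hev
      obtain ⟨r₀, hr₀pos, H⟩ := hev
      exact ⟨r₀, hr₀pos, fun r hr hrlt => H ⟨hr, hrlt⟩⟩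
    set ν : Measure (EuclideanSpace ℝ (Fin n)) := ENNReal.ofReal a • μ with hν
    haveI : IsFiniteMeasure ν := by
      constructor
      rw [hν]
      simp only [Measure.smul_apply, smul_eq_mul]
      exact ENNReal.mul_lt_top ENNReal.ofReal_lt_top (measure_lt_top μ _)
    set v := Besicovitch.vitaliFamily (volume : Measure (EuclideanSpace ℝ (Fin n))) with hv
    have hfreq : ∀ x ∈ Γ, ∃ᶠ t in v.filterAt x, volume t ≤ ν t := by
      intro x hx
      rw [VitaliFamily.frequently_filterAt_iff]
      intro ε' hε'
      set ρ : ℝ := min ε' (min r₀ 1) / 2 with hρ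
      have hρpos : 0 < ρ := by
        have : 0 < min ε' (min r₀ 1) := lt_min hε' (lt_min hr₀pos one_pos)
        positivity
      have hρε' : ρ ≤ ε' := by
        have : min ε' (min r₀ 1) ≤ ε' := min_le_left _ _
        linarith
      have hρr₀ : ρ < r₀ := by
        have h1 : min ε' (min r₀ 1) ≤ r₀ := (min_le_right _ _).trans (min_le_left _ _)
        linarith
      have hρ1 : ρ ≤ 1 := by
        have h1 : min ε' (min r₀ 1) ≤ 1 := (min_le_right _ _).trans (min_le_right _ _)
        linarith
      refine ⟨Metric.closedBall x ρ, ?_, Metric.closedBall_subset_closedBall hρε', ?_⟩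
      · exact Set.mem_image_of_mem _ hρpos
      · have hhρ : 0 < h ρ := hpos ρ ⟨hρpos, hρ1⟩
        have hlt : ρ ^ (n : ℕ) / h ρ < δ := hr₀ ρ hρpos hρr₀
        have hreal : ρ ^ (n : ℕ) * Kv < a * c₁ * h ρ := by
          rw [hδ] at hlt
          rw [div_lt_div_iff₀ hhρ hKvpos] at hlt
          linarith
        have hvol : volume (Metric.closedBall x ρ) = ENNReal.ofReal (ρ ^ (n : ℕ) * Kv) := by
          rw [MeasureTheory.Measure.addHaar_closedBall _ x hρpos.le,
            ENNReal.ofReal_mul (by positivity)]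
          congr 2
          · rw [finrank_euclideanSpace_fin]
          · rw [hKv, ENNReal.ofReal_toReal hVlt.ne]
        rw [hvol]
        have hμlow : ENNReal.ofReal (c₁ * h ρ) ≤ μ (Metric.closedBall x ρ) :=
          (hmeas x hx ρ ⟨hρpos, hρ1⟩).1
        calc ENNReal.ofReal (ρ ^ (n : ℕ) * Kv)
            ≤ ENNReal.ofReal (a * (c₁ * h ρ)) := by
              apply ENNReal.ofReal_le_ofReal; nlinarith
          _ = ENNReal.ofReal a * ENNReal.ofReal (c₁ * h ρ) := by
              rw [ENNReal.ofReal_mul ha.le]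
          _ ≤ ENNReal.ofReal a * μ (Metric.closedBall x ρ) := by
              exact mul_le_mul_right hμlow _
          _ = ν (Metric.closedBall x ρ) := by
              rw [hν]; simp [Measure.smul_apply, smul_eq_mul]
    have := v.measure_le_of_frequently_le ν Measure.AbsolutelyContinuous.rfl Γ hfreq
    calc volume Γ ≤ ν Γ := this
      _ = ENNReal.ofReal a * μ Γ := by rw [hν]; simp [Measure.smul_apply, smul_eq_mul]
      _ ≤ ENNReal.ofReal a * μ Set.univ := mul_le_mul_right (measure_mono (Set.subset_univ _)) _
  -- conclude volume Γ = 0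
  have htend2 : Tendsto (fun a : ℝ => ENNReal.ofReal a * μ Set.univ)
      (nhdsWithin 0 (Set.Ioi 0)) (nhds 0) := by
    have h1 : Tendsto (fun a : ℝ => ENNReal.ofReal a) (nhdsWithin (0:ℝ) (Set.Ioi 0))
        (nhds (ENNReal.ofReal 0)) :=
      (ENNReal.continuous_ofReal.tendsto 0).mono_left nhdsWithin_le_nhds
    rw [ENNReal.ofReal_zero] at h1
    have := ENNReal.Tendsto.mul_const (b := μ Set.univ) h1 (Or.inr (measure_ne_top μ Set.univ))
    simpa using this
  have hle : volume Γ ≤ 0 := by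
    refine ge_of_tendsto htend2 ?_
    filter_upwards [self_mem_nhdsWithin] with a ha
    exact main a ha
  exact le_antisymm hle zero_le
end

section
/- Let h(r) = r^d Ψ(r) with 0 < d < n and Ψ an admissible function (positive monotone on (0,1] with Ψ(2^{-2j}) ≍ Ψ(2^{-j})). Then there exist constants c > 0 and ε > 0 such that h(2^{-j-k})/h(2^{-j}) ≥ c · 2^{-(n-ε)k} for all j, k ∈ ℕ₀; i.e. h satisfies the porosity criterion. In contrast, for d = n and Ψ ≡ 1 (i.e. h(r) = r^n) no such constants exist. -/
open Filter Real Set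

private lemma mem_Ioc_rpow (x : ℝ) (hx : 0 ≤ x) : (2:ℝ) ^ (-x) ∈ Set.Ioc (0:ℝ) 1 :=
  ⟨Real.rpow_pos_of_pos two_pos _,
    Real.rpow_le_one_of_one_le_of_nonpos one_le_two (neg_nonpos.2 hx)⟩

private lemma iterA (Ψ : ℝ → ℝ) (c1 : ℝ) (hc1 : 0 ≤ c1)
    (hstep : ∀ m : ℕ, 1 ≤ m → c1 * Ψ ((2:ℝ) ^ (-(m:ℝ))) ≤ Ψ ((2:ℝ) ^ (-(2*(m:ℝ))))) :
    ∀ (m : ℕ), 1 ≤ m → ∀ i : ℕ,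
      c1 ^ i * Ψ ((2:ℝ)^(-(m:ℝ))) ≤ Ψ ((2:ℝ)^(-((2^i * m : ℕ):ℝ))) := by
  intro m hm i
  induction i with
  | zero => simp
  | succ i ih =>
    have hm' : 1 ≤ 2^i * m := Nat.one_le_iff_ne_zero.2 (by positivity)
    have h := hstep (2^i * m) hm'
    have harg : (2:ℝ) * ((2^i * m : ℕ):ℝ) = ((2^(i+1) * m : ℕ):ℝ) := by push_cast; ring
    rw [harg] at h
    calc c1^(i+1) * Ψ ((2:ℝ)^(-(m:ℝ))) = c1 * (c1^i * Ψ ((2:ℝ)^(-(m:ℝ)))) := by ring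
      _ ≤ c1 * Ψ ((2:ℝ)^(-((2^i*m:ℕ):ℝ))) := mul_le_mul_of_nonneg_left ih hc1
      _ ≤ _ := h

private lemma lemC (c1 δ : ℝ) (hc1 : 0 < c1) (hc1' : c1 ≤ 1) (hδ : 0 < δ) :
    ∃ c₀ : ℝ, 0 < c₀ ∧ ∀ k : ℕ,
      c₀ ≤ c1 ^ (Nat.clog 2 (k+1)) * (2:ℝ) ^ (δ * (k:ℝ)) := by
  obtain ⟨a, ha⟩ : ∃ a : ℝ, a = -Real.log c1 := ⟨_, rfl⟩
  have ha0 : 0 ≤ a := by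
    have := Real.log_nonpos hc1.le hc1'
    rw [ha]; linarith
  have hl2 : 0 < Real.log 2 := Real.log_pos one_lt_two
  obtain ⟨t, ht⟩ : ∃ t : ℝ, t = δ * (Real.log 2)^2 / (a + 1) := ⟨_, rfl⟩
  have ht0 : 0 < t := by rw [ht]; positivity
  obtain ⟨B, hB⟩ : ∃ B : ℝ, B = (a / Real.log 2) * (1/t) + a := ⟨_, rfl⟩
  have hB0 : 0 ≤ B := by rw [hB]; positivity
  refine ⟨Real.exp (-B), Real.exp_pos _, fun k => ?_⟩
  set i : ℕ := Nat.clog 2 (k+1) with hi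
  have key : a * i ≤ δ * Real.log 2 * k + B := by
    rcases Nat.eq_zero_or_pos i with h0 | hipos
    · rw [h0]
      simp only [Nat.cast_zero, mul_zero]
      positivity
    · have hk0 : 0 < k := by
        by_contra hk
        have hk' : k = 0 := by omega
        rw [hk'] at hi
        simp [Nat.clog] at hi
        omega
      have hk1 : 1 < k + 1 := by omega
      have h2 : (2:ℕ) ^ (i - 1) < k + 1 := Nat.pow_pred_clog_lt_self one_lt_two hk1
      have h2' : ((2:ℝ)) ^ (i-1 : ℕ) ≤ (k:ℝ) := by exact_mod_cast Nat.lt_succ_iff.mp h2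
      have hk1' : (1:ℝ) ≤ (k:ℝ) := by exact_mod_cast hk0
      have hlog : ((i:ℝ) - 1) * Real.log 2 ≤ Real.log k := by
        have hll := Real.log_le_log (by positivity) h2'
        rw [Real.log_pow] at hll
        have hcast : ((i - 1 : ℕ):ℝ) = (i:ℝ) - 1 := by
          push_cast [Nat.cast_sub hipos]; ring
        rw [hcast] at hll
        exact hll
      have hsqrtpos : 0 < Real.sqrt k := Real.sqrt_pos.2 (by positivity)
      have hsq : Real.log k ≤ t * k + 1/t := by
        have h1 : Real.log k = 2 * Real.log (Real.sqrt k) := by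
          rw [Real.log_sqrt (by positivity)]; ring
        have h2'' : Real.log (Real.sqrt k) ≤ Real.sqrt k - 1 :=
          Real.log_le_sub_one_of_pos hsqrtpos
        have hs := Real.sq_sqrt (show (0:ℝ) ≤ k by positivity)
        have h3 : 2 * Real.sqrt k ≤ t * k + 1/t := by
          have hexp : 2 * t * Real.sqrt k ≤ t^2 * k + 1 := by
            nlinarith [sq_nonneg (t * Real.sqrt k - 1), hs]
          have hinv : t * (1/t) = 1 := by field_simp
          nlinarith [hexp, ht0, hinv]
        linarith
      have h4 : a / Real.log 2 * t ≤ δ * Real.log 2 := by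
        have h5 : a / (a+1) ≤ 1 := (div_le_one (by linarith)).mpr (by linarith)
        have heq : a / Real.log 2 * t = δ * Real.log 2 * (a / (a+1)) := by
          field_simp [ht]
          have ha1 : a + 1 ≠ 0 := by positivity
          rw [ht]; field_simp
        rw [heq]
        have h6' := mul_le_mul_of_nonneg_left h5 (mul_pos hδ hl2).le
        calc δ * Real.log 2 * (a/(a+1)) ≤ δ * Real.log 2 * 1 := h6'
          _ = δ * Real.log 2 := mul_one _
      have h6 : a * ((i:ℝ) - 1) ≤ (a / Real.log 2) * Real.log k := by
        rw [div_mul_eq_mul_div, le_div_iff₀ hl2]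
        nlinarith [mul_le_mul_of_nonneg_left hlog ha0]
      have h7 : (a / Real.log 2) * Real.log k ≤ (a / Real.log 2) * (t * k + 1/t) :=
        mul_le_mul_of_nonneg_left hsq (by positivity)
      have h8 : (a / Real.log 2) * (t * k) ≤ δ * Real.log 2 * k := by
        have h9 := mul_le_mul_of_nonneg_right h4 (show (0:ℝ) ≤ k by positivity)
        nlinarith [h9]
      have h7' : (a / Real.log 2) * (t * k + 1/t)
          = (a / Real.log 2) * (t * k) + (a / Real.log 2) * (1/t) := by ring
      have hmul : a * (i:ℝ) = a * ((i:ℝ) - 1) + a := by ring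
      linarith [h6, h7, h8, h7', hmul, hB.ge, hB.le]
  have e1 : c1 ^ i = Real.exp ((i:ℝ) * Real.log c1) := by
    rw [Real.exp_nat_mul, Real.exp_log hc1]
  have e2 : (2:ℝ) ^ (δ * (k:ℝ)) = Real.exp (Real.log 2 * (δ * k)) :=
    Real.rpow_def_of_pos two_pos _
  rw [e1, e2, ← Real.exp_add]
  apply Real.exp_le_exp.2
  have hrw : (i:ℝ) * Real.log c1 = -(a * i) := by rw [ha]; ring
  rw [hrw]
  nlinarith [key]

theorem porosity_criterion_d_Psi (n : ℕ) (d : ℝ) (hd : 0 < d) (hdn : d < n)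
    (Ψ : ℝ → ℝ)
    (hpos : ∀ t ∈ Set.Ioc (0 : ℝ) 1, 0 < Ψ t)
    (hmono : MonotoneOn Ψ (Set.Ioc (0 : ℝ) 1) ∨ AntitoneOn Ψ (Set.Ioc (0 : ℝ) 1))
    (hadm : ∃ c C : ℝ, 0 < c ∧ 0 < C ∧ ∀ j : ℕ, 1 ≤ j →
      c * Ψ (2 ^ (-(j : ℝ))) ≤ Ψ (2 ^ (-(2 * j : ℝ))) ∧
      Ψ (2 ^ (-(2 * j : ℝ))) ≤ C * Ψ (2 ^ (-(j : ℝ)))) :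
    (∃ c ε : ℝ, 0 < c ∧ 0 < ε ∧ ∀ j k : ℕ,
      c * 2 ^ (-(((n : ℝ) - ε) * k)) ≤
        ((2 : ℝ) ^ (-((j : ℝ) + k))) ^ d * Ψ (2 ^ (-((j : ℝ) + k))) /
          (((2 : ℝ) ^ (-(j : ℝ))) ^ d * Ψ (2 ^ (-(j : ℝ))))) ∧
    ¬ (∃ c ε : ℝ, 0 < c ∧ 0 < ε ∧ ∀ j k : ℕ,
      c * 2 ^ (-(((n : ℝ) - ε) * k)) ≤
        ((2 : ℝ) ^ (-((j : ℝ) + k))) ^ (n : ℝ) / ((2 : ℝ) ^ (-(j : ℝ))) ^ (n : ℝ)) := by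
  obtain ⟨c, C, hc, hC, hadm'⟩ := hadm
  set δ : ℝ := ((n:ℝ) - d)/2 with hδdef
  have hδ : 0 < δ := by rw [hδdef]; linarith
  constructor
  · -- Part 1
    set c1 : ℝ := min c 1 with hc1def
    have hc1 : 0 < c1 := lt_min hc one_pos
    have hc1' : c1 ≤ 1 := min_le_right _ _
    have hstep : ∀ m : ℕ, 1 ≤ m → c1 * Ψ ((2:ℝ)^(-(m:ℝ))) ≤ Ψ ((2:ℝ)^(-(2*(m:ℝ)))) := by
      intro m hm
      have hpm : 0 < Ψ ((2:ℝ)^(-(m:ℝ))) := hpos _ (mem_Ioc_rpow _ (by positivity))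
      calc c1 * Ψ ((2:ℝ)^(-(m:ℝ))) ≤ c * Ψ ((2:ℝ)^(-(m:ℝ))) :=
            mul_le_mul_of_nonneg_right (min_le_left _ _) hpm.le
        _ ≤ _ := (hadm' m hm).1
    obtain ⟨c00, hc00, hc00le⟩ := lemC c1 δ hc1 hc1' hδ
    have key : ∃ c₀ : ℝ, 0 < c₀ ∧ ∀ j k : ℕ,
        c₀ * (2:ℝ)^(-(δ*(k:ℝ))) * Ψ ((2:ℝ)^(-(j:ℝ))) ≤ Ψ ((2:ℝ)^(-((j:ℝ)+(k:ℝ)))) := by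
      rcases hmono with hmon | hant
      · -- monotone case
        have hΨ1 : 0 < Ψ 1 := hpos 1 ⟨one_pos, le_refl 1⟩
        have hΨhalf : 0 < Ψ ((2:ℝ)^(-(1:ℝ))) := hpos _ (mem_Ioc_rpow 1 one_pos.le)
        set ρ : ℝ := Ψ ((2:ℝ)^(-(1:ℝ))) / Ψ 1 with hρdef
        have hρ : 0 < ρ := div_pos hΨhalf hΨ1
        have hone : (1:ℝ) ∈ Set.Ioc (0:ℝ) 1 := ⟨one_pos, le_refl 1⟩
        have hρ1 : ρ ≤ 1 := by
          rw [hρdef, div_le_one hΨ1]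
          exact hmon (mem_Ioc_rpow 1 one_pos.le) hone
            (Real.rpow_le_one_of_one_le_of_nonpos one_le_two (by norm_num))
        refine ⟨ρ * c00, mul_pos hρ hc00, fun j k => ?_⟩
        set m : ℕ := max j 1 with hmdef
        have hm1 : 1 ≤ m := le_max_right _ _
        set i : ℕ := Nat.clog 2 (k+1) with hidef
        have hΨj : 0 < Ψ ((2:ℝ)^(-(j:ℝ))) := hpos _ (mem_Ioc_rpow _ (by positivity))
        have step1 : ρ * Ψ ((2:ℝ)^(-(j:ℝ))) ≤ Ψ ((2:ℝ)^(-(m:ℝ))) := by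
          rcases Nat.eq_zero_or_pos j with hj0 | hj1
          · subst hj0
            have hm' : m = 1 := by simp [hmdef]
            rw [hm']
            simp only [Nat.cast_zero, neg_zero, Real.rpow_zero, Nat.cast_one]
            rw [hρdef, div_mul_cancel₀ _ (ne_of_gt hΨ1)]
          · have hmj : m = j := by omega
            rw [hmj]
            nlinarith [hρ1, hΨj]
        have step2 := iterA Ψ c1 hc1.le hstep m hm1 i
        have hle : (j:ℝ) + k ≤ ((2^i*m:ℕ):ℝ) := by
          have h1 : k + 1 ≤ 2^i := Nat.le_pow_clog one_lt_two _
          have hjm : j ≤ m := le_max_left _ _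
          have hkm : k ≤ k * m := by
            calc k = k * 1 := (mul_one k).symm
              _ ≤ k * m := Nat.mul_le_mul_left k hm1
          have h2 : j + k ≤ 2^i * m := by
            calc j + k ≤ m + k * m := add_le_add hjm hkm
              _ = (k+1) * m := by ring
              _ ≤ 2^i * m := Nat.mul_le_mul_right m h1
          exact_mod_cast h2
        have step3 : Ψ ((2:ℝ)^(-((2^i*m:ℕ):ℝ))) ≤ Ψ ((2:ℝ)^(-((j:ℝ)+(k:ℝ)))) :=
          hmon (mem_Ioc_rpow _ (by positivity)) (mem_Ioc_rpow _ (by positivity))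
            (Real.rpow_le_rpow_of_exponent_le one_le_two (neg_le_neg hle))
        have hE' : 0 < (2:ℝ)^(δ*(k:ℝ)) := Real.rpow_pos_of_pos two_pos _
        have hcc : c00 * (2:ℝ)^(-(δ*(k:ℝ))) ≤ c1 ^ i := by
          rw [Real.rpow_neg (by norm_num : (0:ℝ) ≤ 2), ← div_eq_mul_inv,
            div_le_iff₀ hE']
          exact hc00le k
        calc ρ * c00 * (2:ℝ)^(-(δ*(k:ℝ))) * Ψ ((2:ℝ)^(-(j:ℝ)))
            = (c00 * (2:ℝ)^(-(δ*(k:ℝ)))) * (ρ * Ψ ((2:ℝ)^(-(j:ℝ)))) := by ring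
          _ ≤ c1^i * (ρ * Ψ ((2:ℝ)^(-(j:ℝ)))) :=
              mul_le_mul_of_nonneg_right hcc (by positivity)
          _ ≤ c1^i * Ψ ((2:ℝ)^(-(m:ℝ))) :=
              mul_le_mul_of_nonneg_left step1 (by positivity)
          _ ≤ Ψ ((2:ℝ)^(-((2^i*m:ℕ):ℝ))) := step2
          _ ≤ Ψ ((2:ℝ)^(-((j:ℝ)+(k:ℝ)))) := step3
      · -- antitone case
        refine ⟨1, one_pos, fun j k => ?_⟩
        have hΨj : 0 < Ψ ((2:ℝ)^(-(j:ℝ))) := hpos _ (mem_Ioc_rpow _ (by positivity))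
        have hmono2 : Ψ ((2:ℝ)^(-(j:ℝ))) ≤ Ψ ((2:ℝ)^(-((j:ℝ)+(k:ℝ)))) :=
          hant (mem_Ioc_rpow _ (by positivity)) (mem_Ioc_rpow _ (by positivity))
            (Real.rpow_le_rpow_of_exponent_le one_le_two
              (by linarith [show (0:ℝ) ≤ (k:ℝ) from Nat.cast_nonneg k]))
        have hD1 : (2:ℝ)^(-(δ*(k:ℝ))) ≤ 1 :=
          Real.rpow_le_one_of_one_le_of_nonpos one_le_two (neg_nonpos.2 (by positivity))
        have := mul_le_mul_of_nonneg_right hD1 hΨj.le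
        nlinarith [this, hmono2]
    obtain ⟨c₀, hc₀, hkey⟩ := key
    refine ⟨c₀, δ, hc₀, hδ, fun j k => ?_⟩
    have hΨj : 0 < Ψ ((2:ℝ)^(-(j:ℝ))) := hpos _ (mem_Ioc_rpow _ (by positivity))
    have hY : (0:ℝ) < ((2:ℝ) ^ (-(j:ℝ))) ^ d * Ψ ((2:ℝ) ^ (-(j:ℝ))) := by positivity
    rw [le_div_iff₀ hY]
    have e1 : ((2:ℝ) ^ (-((j:ℝ) + k))) ^ d = (2:ℝ)^(-((j:ℝ)*d)) * (2:ℝ)^(-((k:ℝ)*d)) := by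
      rw [← Real.rpow_mul (by norm_num : (0:ℝ) ≤ 2),
        show (-((j:ℝ)+k))*d = -((j:ℝ)*d) + -((k:ℝ)*d) by ring,
        Real.rpow_add two_pos]
    have e2 : ((2:ℝ) ^ (-(j:ℝ))) ^ d = (2:ℝ)^(-((j:ℝ)*d)) := by
      rw [← Real.rpow_mul (by norm_num : (0:ℝ) ≤ 2)]
      congr 1; ring
    have e3 : (2:ℝ) ^ (-(((n:ℝ) - δ) * (k:ℝ))) = (2:ℝ)^(-((k:ℝ)*d)) * (2:ℝ)^(-(δ*(k:ℝ))) := by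
      rw [show -(((n:ℝ)-δ)*(k:ℝ)) = -((k:ℝ)*d) + -(δ*(k:ℝ)) by rw [hδdef]; ring,
        Real.rpow_add two_pos]
    rw [e1, e2, e3]
    calc c₀ * ((2:ℝ)^(-((k:ℝ)*d)) * (2:ℝ)^(-(δ*(k:ℝ))))
          * ((2:ℝ)^(-((j:ℝ)*d)) * Ψ ((2:ℝ)^(-(j:ℝ))))
        = ((2:ℝ)^(-((j:ℝ)*d)) * (2:ℝ)^(-((k:ℝ)*d)))
          * (c₀ * (2:ℝ)^(-(δ*(k:ℝ))) * Ψ ((2:ℝ)^(-(j:ℝ)))) := by ring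
      _ ≤ ((2:ℝ)^(-((j:ℝ)*d)) * (2:ℝ)^(-((k:ℝ)*d))) * Ψ ((2:ℝ)^(-((j:ℝ)+(k:ℝ)))) :=
          mul_le_mul_of_nonneg_left (hkey j k) (by positivity)
      _ = (2:ℝ)^(-((j:ℝ)*d)) * (2:ℝ)^(-((k:ℝ)*d)) * Ψ ((2:ℝ)^(-((j:ℝ)+(k:ℝ)))) := by ring
  · -- Part 2
    rintro ⟨c', ε, hc', hε, H⟩
    have hl2 : 0 < Real.log 2 := Real.log_pos one_lt_two
    obtain ⟨k, hk⟩ := exists_nat_gt ((1/c') / (ε * Real.log 2))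
    have h := H 0 k
    have e0 : (2:ℝ) ^ (-((0:ℕ):ℝ)) = 1 := by simp
    rw [e0, Real.one_rpow, div_one] at h
    have e2 : ((2:ℝ) ^ (-(((0:ℕ):ℝ) + k))) ^ (n:ℝ) = (2:ℝ) ^ (-((n:ℝ)*k)) := by
      rw [← Real.rpow_mul (by norm_num : (0:ℝ) ≤ 2)]
      congr 1; push_cast; ring
    rw [e2] at h
    have hsplit : (2:ℝ) ^ (-(((n:ℝ) - ε) * (k:ℝ))) = (2:ℝ)^(-((n:ℝ)*k)) * (2:ℝ)^(ε*k) := by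
      rw [← Real.rpow_add two_pos]
      congr 1; ring
    rw [hsplit] at h
    have hp : 0 < (2:ℝ)^(-((n:ℝ)*(k:ℝ))) := Real.rpow_pos_of_pos two_pos _
    have h2 : c' * (2:ℝ)^(ε*(k:ℝ)) ≤ 1 := by nlinarith [h, hp]
    have hbig : 1 + Real.log 2 * (ε*k) ≤ (2:ℝ)^(ε*(k:ℝ)) := by
      rw [Real.rpow_def_of_pos two_pos]
      linarith [Real.add_one_le_exp (Real.log 2 * (ε*k))]
    have hfin : 1 < c' * (2:ℝ)^(ε*(k:ℝ)) := by
      have hk' : (1/c') < ε * Real.log 2 * k := by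
        rw [div_lt_iff₀ (by positivity)] at hk
        nlinarith [hk]
      have hlt : (1/c') < (2:ℝ)^(ε*(k:ℝ)) := by nlinarith [hbig]
      rw [div_lt_iff₀ hc'] at hlt
      nlinarith [hlt]
    linarith
end

section
/- Let 0 < p < 1 and p < q < ∞, and define v_p by 1/v_p = 1/p − 1/q. Let h be a gauge function with h_j := h(2^{-j}) → 0 as j → ∞, and let σ be a sequence of positive reals with lim_{j→∞} h_j σ_j^{v_p} = 0. If there exist r ∈ [p, min{q,1}] and v_r with 1/v_r = 1/r − 1/q such that ∑_j (σ_j^{-1} h_j^{1/r − 1/p})^{v_r} < ∞, then ∑_j σ_j^{-v_p} < ∞. -/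
open Filter Real

theorem conjecture_consistency (p q vp : ℝ) (hp0 : 0 < p) (hp1 : p < 1)
    (hpq : p < q) (hvp : 1 / vp = 1 / p - 1 / q)
    (h σ : ℕ → ℝ) (hhpos : ∀ j, 0 < h j) (hσpos : ∀ j, 0 < σ j)
    (hh0 : Tendsto h atTop (nhds 0))
    (hlim : Tendsto (fun j => h j * σ j ^ vp) atTop (nhds 0))
    (hex : ∃ r vr : ℝ, p ≤ r ∧ r ≤ min q 1 ∧ 1 / vr = 1 / r - 1 / q ∧
      Summable (fun j => ((σ j)⁻¹ * (h j) ^ (1 / r - 1 / p)) ^ vr)) :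
    Summable (fun j => (σ j) ^ (-vp)) := by
  obtain ⟨r, vr, hpr, hrmin, hvr, hsum⟩ := hex
  have hq0 : 0 < q := hp0.trans hpq
  have hr0 : 0 < r := lt_of_lt_of_le hp0 hpr
  have hvp0 : 0 < vp := by
    have h1 : 0 < 1 / vp := by
      rw [hvp]
      have : 1 / q < 1 / p := one_div_lt_one_div_of_lt hp0 hpq
      linarith
    exact (one_div_pos).mp h1
  -- rule out r = q
  rcases eq_or_lt_of_le (le_trans hrmin (min_le_left q 1)) with hrq | hrq
  · exfalso
    have hvr0 : vr = 0 := by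
      have : 1 / vr = 0 := by rw [hvr, hrq]; ring
      simpa [one_div, inv_eq_zero] using this
    have : Summable (fun _ : ℕ => (1 : ℝ)) := by
      have := hsum
      simp only [hvr0, Real.rpow_zero] at this
      exact this
    have := (summable_const_iff (1 : ℝ)).mp this
    norm_num at this
  · -- main case : r < q, so vr > 0
    have hvr0 : 0 < vr := by
      have h1 : 0 < 1 / vr := by
        rw [hvr]
        have : 1 / q < 1 / r := one_div_lt_one_div_of_lt hr0 hrq
        linarith
      exact (one_div_pos).mp h1
    set e : ℝ := 1 / r - 1 / p with he
    have he0 : e ≤ 0 := by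
      have : 1 / r ≤ 1 / p := one_div_le_one_div_of_le hp0 hpr
      simp only [he]; linarith
    -- key exponent identity : vr + vp * e * vr = vp
    have hkey : vr + vp * e * vr = vp := by
      have hvpne : vp ≠ 0 := ne_of_gt hvp0
      have hvrne : vr ≠ 0 := ne_of_gt hvr0
      have hpne : p ≠ 0 := ne_of_gt hp0
      have hqne : q ≠ 0 := ne_of_gt hq0
      have hrne : r ≠ 0 := ne_of_gt hr0
      rw [he]
      field_simp [he] at hvp hvr ⊢
      nlinarith [hvp, hvr, mul_pos hvp0 hvr0]
    -- bound on h j * σ j ^ vp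
    obtain ⟨C, hC⟩ := hlim.bddAbove_range
    have hCb : ∀ j, h j * σ j ^ vp ≤ C := fun j => hC ⟨j, rfl⟩
    have hC0 : 0 < C :=
      lt_of_lt_of_le (mul_pos (hhpos 0) (Real.rpow_pos_of_pos (hσpos 0) vp)) (hCb 0)
    -- pointwise comparison
    have hptwise : ∀ j, σ j ^ (-vp) ≤ C ^ (-(e * vr)) * ((σ j)⁻¹ * h j ^ e) ^ vr := by
      intro j
      have hs := hσpos j
      have hH := hhpos j
      have h1 : h j ≤ C * σ j ^ (-vp) := by
        have hpow : (0:ℝ) < σ j ^ vp := Real.rpow_pos_of_pos hs vp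
        rw [Real.rpow_neg hs.le]
        calc h j = h j * σ j ^ vp * (σ j ^ vp)⁻¹ := by field_simp
          _ ≤ C * (σ j ^ vp)⁻¹ :=
            mul_le_mul_of_nonneg_right (hCb j) (inv_nonneg.mpr hpow.le)
      -- h j ^ e ≥ (C * σ j ^ (-vp)) ^ e  since e ≤ 0
      have h2 : (C * σ j ^ (-vp)) ^ e ≤ h j ^ e :=
        Real.rpow_le_rpow_of_nonpos hH h1 he0
      have h3 : (C * σ j ^ (-vp)) ^ e = C ^ e * σ j ^ (-vp * e) := by
        rw [Real.mul_rpow hC0.le (Real.rpow_pos_of_pos hs (-vp)).le,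
          ← Real.rpow_mul hs.le]
      have h4 : C ^ e * σ j ^ (-vp * e) ≤ h j ^ e := h3 ▸ h2
      -- raise to power vr ≥ 0
      have h5 : (C ^ e * σ j ^ (-vp * e)) ^ vr ≤ (h j ^ e) ^ vr :=
        Real.rpow_le_rpow (by positivity) h4 hvr0.le
      have h6 : ((σ j)⁻¹ * h j ^ e) ^ vr = σ j ^ (-vr) * (h j ^ e) ^ vr := by
        rw [Real.mul_rpow (inv_nonneg.mpr hs.le) (Real.rpow_pos_of_pos hH e).le,
          Real.inv_rpow hs.le, ← Real.rpow_neg hs.le]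
      have h7 : (C ^ e * σ j ^ (-vp * e)) ^ vr = C ^ (e * vr) * σ j ^ (-vp * e * vr) := by
        rw [Real.mul_rpow (Real.rpow_pos_of_pos hC0 e).le
          (Real.rpow_pos_of_pos hs (-vp * e)).le, ← Real.rpow_mul hC0.le,
          ← Real.rpow_mul hs.le]
      have h8 : σ j ^ (-vr) * (C ^ (e * vr) * σ j ^ (-vp * e * vr)) ≤
          ((σ j)⁻¹ * h j ^ e) ^ vr := by
        rw [h6]
        have := mul_le_mul_of_nonneg_left h5 (Real.rpow_pos_of_pos hs (-vr)).le
        rw [h7] at this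
        exact this
      have h9 : σ j ^ (-vr) * (C ^ (e * vr) * σ j ^ (-vp * e * vr)) =
          C ^ (e * vr) * σ j ^ (-vp) := by
        rw [← mul_assoc, mul_comm (σ j ^ (-vr)) (C ^ (e * vr)), mul_assoc,
          ← Real.rpow_add hs, show -vr + -vp * e * vr = -vp by linarith [hkey]]
      rw [h9] at h8
      -- multiply both sides by C ^ (-(e*vr))
      have h10 := mul_le_mul_of_nonneg_left h8 (Real.rpow_pos_of_pos hC0 (-(e * vr))).le
      rw [← mul_assoc, ← Real.rpow_add hC0] at h10
      simp only [neg_add_cancel, Real.rpow_zero, one_mul] at h10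
      exact h10
    exact Summable.of_nonneg_of_le
      (fun j => (Real.rpow_pos_of_pos (hσpos j) (-vp)).le)
      hptwise
      (hsum.mul_left _)
end
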